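/- Let a ∈ ℝ and 0 ≤ R ≤ 1 with α := a + R > 0, and let K_{a,R} = h + conj(g) be the generalized harmonic Koebe function. Then for every r ∈ [0, 1), |K_{a,R}(r)| = (1/(2α))·[((1+r)/(1−r))^α − 1]; that is, K_{a,R} attains equality in the growth upper bound for affine and linear invariant families of order α along the positive real axis. -/

import Mathlib

open Complex Set

noncomputable section

/-- The open unit disk in the complex plane. -/
def unitDisk : Set ℂ := {z : ℂ | ‖z‖ < 1}

/-- The generalized Koebe function `k_a`, using the principal branch of the logarithm
(via the complex power function). -/
def koebeFn (a : ℂ) (z : ℂ) : ℂ :=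
  if a = 0 then (1 / 2) * Complex.log ((1 + z) / (1 - z))
  else (1 / (2 * a)) * (((1 + z) / (1 - z)) ^ a - 1)

/-- The lens map `l_R` (with principal-branch powers); note that this formula also
gives `l_0 ≡ 0` and `l_1 = id` on the unit disk. -/
def lensMap (R : ℝ) (z : ℂ) : ℂ :=
  (((1 + z) / (1 - z)) ^ (R : ℂ) - 1) / (((1 + z) / (1 - z)) ^ (R : ℂ) + 1)

/-- The `n`-th Taylor coefficient of `f` at `0`. -/
def coeffAt (f : ℂ → ℂ) (n : ℕ) : ℂ := iteratedDeriv n f 0 / n.factorial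

/- ### Auxiliary lemmas -/

lemma unitDisk_eq_ball : unitDisk = Metric.ball (0:ℂ) 1 := by
  ext z; simp [unitDisk, Metric.mem_ball, Complex.dist_eq]

lemma isOpen_unitDisk : IsOpen unitDisk := by
  rw [unitDisk_eq_ball]; exact Metric.isOpen_ball

lemma mem_unitDisk_of_Ioo {t : ℝ} (ht : t ∈ Ioo (-1:ℝ) 1) : (t:ℂ) ∈ unitDisk := by
  simp only [unitDisk, mem_setOf_eq, Complex.norm_real, Real.norm_eq_abs]
  rw [abs_lt]; exact ⟨ht.1, ht.2⟩

lemma x_pos {t : ℝ} (ht : t ∈ Ioo (-1:ℝ) 1) : (0:ℝ) < (1 + t) / (1 - t) := by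
  have := ht.1; have := ht.2
  apply div_pos <;> linarith

lemma w_ofReal (t : ℝ) : (((1 + t) / (1 - t) : ℝ) : ℂ) = (1 + (t:ℂ)) / (1 - (t:ℂ)) := by
  push_cast; ring

lemma w_slit {t : ℝ} (ht : t ∈ Ioo (-1:ℝ) 1) :
    (1 + (t:ℂ)) / (1 - (t:ℂ)) ∈ Complex.slitPlane := by
  rw [← w_ofReal]
  exact Complex.ofReal_mem_slitPlane.2 (x_pos ht)

lemma one_sub_ne {t : ℝ} (ht : t ∈ Ioo (-1:ℝ) 1) : (1:ℂ) - (t:ℂ) ≠ 0 := by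
  intro hc
  rw [sub_eq_zero] at hc
  have : (1:ℝ) = t := by exact_mod_cast hc
  linarith [ht.2]

lemma hasDerivAt_w {t : ℝ} (ht : t ∈ Ioo (-1:ℝ) 1) :
    HasDerivAt (fun z : ℂ => (1 + z) / (1 - z)) (2 / (1 - (t:ℂ)) ^ 2) (t:ℂ) := by
  have h1 : (1:ℂ) - (t:ℂ) ≠ 0 := one_sub_ne ht
  have hnum : HasDerivAt (fun z : ℂ => 1 + z) 1 (t:ℂ) := by
    simpa using (hasDerivAt_id ((t:ℂ))).const_add 1
  have hden : HasDerivAt (fun z : ℂ => 1 - z) (-1) (t:ℂ) := by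
    simpa using (hasDerivAt_id ((t:ℂ))).const_sub 1
  have := hnum.div hden h1
  refine this.congr_deriv ?_
  field_simp
  ring

lemma koebe_hasDerivAt (c : ℂ) {t : ℝ} (ht : t ∈ Ioo (-1:ℝ) 1) :
    HasDerivAt (koebeFn c)
      (((1 + (t:ℂ)) / (1 - (t:ℂ))) ^ (c - 1) / (1 - (t:ℂ)) ^ 2) (t:ℂ) := by
  have h1 : (1:ℂ) - (t:ℂ) ≠ 0 := one_sub_ne ht
  have hw := hasDerivAt_w ht
  have hslit := w_slit ht
  have hw0 : (1 + (t:ℂ)) / (1 - (t:ℂ)) ≠ 0 := Complex.slitPlane_ne_zero hslit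
  by_cases hc : c = 0
  · subst hc
    have hfun : koebeFn 0 = fun z : ℂ => (1/2 : ℂ) * Complex.log ((1 + z) / (1 - z)) := by
      funext z; simp [koebeFn]
    rw [hfun]
    have := (hw.clog hslit).const_mul (1/2 : ℂ)
    refine this.congr_deriv ?_
    rw [zero_sub, Complex.cpow_neg_one]
    field_simp
  · have hfun : koebeFn c = fun z : ℂ => (1/(2*c) : ℂ) * (((1 + z) / (1 - z)) ^ c - 1) := by
      funext z; simp [koebeFn, hc]
    rw [hfun]
    have := ((hw.cpow_const (c := c) hslit).sub_const 1).const_mul (1/(2*c) : ℂ)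
    refine this.congr_deriv ?_
    field_simp

lemma koebe_value (c : ℝ) (hc : c ≠ 0) {t : ℝ} (ht : t ∈ Ioo (-1:ℝ) 1) :
    koebeFn (c:ℂ) (t:ℂ) = (((1/(2*c)) * (((1+t)/(1-t)) ^ c - 1) : ℝ) : ℂ) := by
  have hx := x_pos ht
  have hcc : (c:ℂ) ≠ 0 := by exact_mod_cast hc
  simp only [koebeFn, if_neg hcc]
  rw [← w_ofReal, ← Complex.ofReal_cpow hx.le]
  push_cast
  ring

lemma koebe_real (c : ℝ) {t : ℝ} (ht : t ∈ Ioo (-1:ℝ) 1) :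
    ∃ v : ℝ, koebeFn (c:ℂ) (t:ℂ) = (v:ℂ) := by
  have hx := x_pos ht
  by_cases hc : c = 0
  · subst hc
    refine ⟨(1/2) * Real.log ((1+t)/(1-t)), ?_⟩
    simp only [koebeFn, if_pos rfl, Complex.ofReal_zero]
    rw [← w_ofReal, ← Complex.ofReal_log hx.le]
    push_cast
    ring
  · exact ⟨_, koebe_value c hc ht⟩

/-- For real `a` and `0 ≤ R ≤ 1` with `α := a + R > 0`, the generalized harmonic Koebe
function `K_{a,R} = h + conj g` (defined by `h - g = k_a`, `g' = l_R·h'`,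
`h(0) = g(0) = 0`) attains equality in the growth upper bound along the positive real
axis: `|K_{a,R}(r)| = (1/(2α))·[((1+r)/(1-r))^α - 1]` for `0 ≤ r < 1`. -/
theorem generalized_harmonic_koebe_growth_equality
    (a R : ℝ) (hR0 : 0 ≤ R) (hR1 : R ≤ 1) (hα : 0 < a + R)
    (h g : ℂ → ℂ)
    (hh : DifferentiableOn ℂ h unitDisk) (hg : DifferentiableOn ℂ g unitDisk)
    (h0 : h 0 = 0) (g0 : g 0 = 0)
    (hshear : ∀ z ∈ unitDisk, h z - g z = koebeFn (a : ℂ) z)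
    (hdil : ∀ z ∈ unitDisk, deriv g z = lensMap R z * deriv h z) :
    ∀ r : ℝ, 0 ≤ r → r < 1 →
      ‖h (r : ℂ) + (starRingEnd ℂ) (g (r : ℂ))‖
        = (1 / (2 * (a + R))) * (((1 + r) / (1 - r)) ^ (a + R) - 1) := by
  intro r hr0 hr1
  set α : ℝ := a + R with hαdef
  have hαne : α ≠ 0 := ne_of_gt hα
  have hrI : r ∈ Ioo (-1:ℝ) 1 := ⟨by linarith, hr1⟩
  have h0I : (0:ℝ) ∈ Ioo (-1:ℝ) 1 := ⟨by norm_num, by norm_num⟩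
  -- the auxiliary real-variable function
  set u : ℝ → ℂ := fun t => h (t:ℂ) + g (t:ℂ) - koebeFn ((α:ℝ):ℂ) (t:ℂ) with hu_def
  -- key : u has zero derivative on Ioo (-1) 1
  have key : ∀ t ∈ Ioo (-1:ℝ) 1, HasDerivAt u 0 t := by
    intro t ht
    have hz : (t:ℂ) ∈ unitDisk := mem_unitDisk_of_Ioo ht
    have hnhds : unitDisk ∈ nhds (t:ℂ) := isOpen_unitDisk.mem_nhds hz
    have hha : DifferentiableAt ℂ h (t:ℂ) := hh.differentiableAt hnhds
    have hga : DifferentiableAt ℂ g (t:ℂ) := hg.differentiableAt hnhds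
    have h1 : (1:ℂ) - (t:ℂ) ≠ 0 := one_sub_ne ht
    set w : ℂ := (1 + (t:ℂ)) / (1 - (t:ℂ)) with hw_def
    have hw0 : w ≠ 0 := Complex.slitPlane_ne_zero (w_slit ht)
    set W : ℂ := w ^ (R:ℂ) with hW_def
    -- W is a positive real, so W + 1 ≠ 0
    have hWre : W = ((((1+t)/(1-t)) ^ R : ℝ) : ℂ) := by
      rw [hW_def, hw_def, ← w_ofReal, ← Complex.ofReal_cpow (x_pos ht).le]
    have hW1 : W + 1 ≠ 0 := by
      rw [hWre]
      intro hcon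
      have : (((1+t)/(1-t)) ^ R + 1 : ℝ) = 0 := by exact_mod_cast hcon
      nlinarith [Real.rpow_pos_of_pos (x_pos ht) R]
    -- derivative of h - g equals derivative of koebeFn a
    have kda := koebe_hasDerivAt (a:ℂ) ht
    have kdα := koebe_hasDerivAt ((α:ℝ):ℂ) ht
    have heq : deriv h (t:ℂ) - deriv g (t:ℂ) = w ^ ((a:ℂ) - 1) / (1 - (t:ℂ)) ^ 2 := by
      have hev : (fun z => h z - g z) =ᶠ[nhds (t:ℂ)] koebeFn (a:ℂ) :=
        Filter.eventuallyEq_of_mem hnhds hshear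
      have e1 : deriv (fun z => h z - g z) (t:ℂ) = w ^ ((a:ℂ) - 1) / (1 - (t:ℂ)) ^ 2 := by
        rw [hev.deriv_eq]; exact kda.deriv
      rwa [deriv_fun_sub hha hga] at e1
    have hL : deriv g (t:ℂ) = ((W - 1) / (W + 1)) * deriv h (t:ℂ) := by
      have := hdil (t:ℂ) hz
      rwa [lensMap] at this
    -- conclude: deriv h + deriv g = w^(α-1)/(1-t)^2
    have hsum : deriv h (t:ℂ) + deriv g (t:ℂ) = w ^ (((α:ℝ):ℂ) - 1) / (1 - (t:ℂ)) ^ 2 := by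
      have hwpow : w ^ (((α:ℝ):ℂ) - 1) = W * w ^ ((a:ℂ) - 1) := by
        rw [hW_def, ← Complex.cpow_add _ _ hw0]
        congr 1
        push_cast [hαdef]
        ring
      rw [hL] at heq ⊢
      rw [hwpow]
      field_simp at heq ⊢
      linear_combination W * heq
    -- assemble
    have Hc : HasDerivAt (fun z : ℂ => h z + g z - koebeFn ((α:ℝ):ℂ) z)
        ((deriv h (t:ℂ) + deriv g (t:ℂ)) - w ^ (((α:ℝ):ℂ) - 1) / (1 - (t:ℂ)) ^ 2) (t:ℂ) :=
      (hha.hasDerivAt.add hga.hasDerivAt).sub kdα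
    rw [hsum, sub_self] at Hc
    exact Hc.comp_ofReal
  -- u is constant on Ioo (-1) 1, hence u r = u 0
  have hur : u r = u 0 := by
    have hb := (convex_Ioo (-1:ℝ) 1).norm_image_sub_le_of_norm_hasDerivWithin_le
      (f' := fun _ => (0:ℂ)) (fun x hx => (key x hx).hasDerivWithinAt)
      (fun x _ => le_of_eq norm_zero) h0I hrI
    simp only [norm_zero, zero_mul] at hb
    exact sub_eq_zero.mp (norm_le_zero_iff.mp hb)
  -- u 0 = 0
  have hu0 : u 0 = 0 := by
    have hk0 : koebeFn ((α:ℝ):ℂ) 0 = 0 := by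
      have hv := koebe_value α hαne h0I
      rw [Complex.ofReal_zero] at hv
      rw [hv]; norm_num
    show h ((0:ℝ):ℂ) + g ((0:ℝ):ℂ) - koebeFn ((α:ℝ):ℂ) ((0:ℝ):ℂ) = 0
    rw [Complex.ofReal_zero, h0, g0, hk0]; ring
  -- so h r + g r = koebeFn α r
  have hsum_r : h (r:ℂ) + g (r:ℂ) = koebeFn ((α:ℝ):ℂ) (r:ℂ) := by
    have := hur.trans hu0
    simp only [hu_def] at this
    linear_combination this
  have hdiff_r : h (r:ℂ) - g (r:ℂ) = koebeFn ((a:ℝ):ℂ) (r:ℂ) :=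
    hshear (r:ℂ) (mem_unitDisk_of_Ioo hrI)
  -- values are real
  set vα : ℝ := (1/(2*α)) * (((1+r)/(1-r)) ^ α - 1) with hvα
  have hkα : koebeFn ((α:ℝ):ℂ) (r:ℂ) = (vα : ℂ) := koebe_value α hαne hrI
  obtain ⟨va, hka⟩ := koebe_real a hrI
  -- g r is real
  have hg_real : (starRingEnd ℂ) (g (r:ℂ)) = g (r:ℂ) := by
    have hgr : g (r:ℂ) = (((vα - va)/2 : ℝ) : ℂ) := by
      have := hsum_r
      rw [hkα] at this
      rw [hka] at hdiff_r
      push_cast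
      linear_combination (this - hdiff_r) / 2
    rw [hgr, Complex.conj_ofReal]
  -- finish
  rw [hg_real]
  have : h (r:ℂ) + g (r:ℂ) = (vα : ℂ) := by rw [hsum_r, hkα]
  rw [this, Complex.norm_real, Real.norm_eq_abs]
  have hx1 : (1:ℝ) ≤ (1+r)/(1-r) := by
    rw [le_div_iff₀ (by linarith)]
    linarith
  have hvα_nonneg : 0 ≤ vα := by
    have h1 : (1:ℝ) ≤ ((1+r)/(1-r)) ^ α := Real.one_le_rpow hx1 (le_of_lt hα)
    have : 0 ≤ (1/(2*α)) := by positivity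
    rw [hvα]
    nlinarith
  rw [_root_.abs_of_nonneg hvα_nonneg, hvα, hαdef]
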